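/- Let Δ be a partition of {1,…,n} with block sizes n_δ, and let w_δ > 0 (δ ∈ Δ) and w_d > 0 (d ∈ {1,…,n}) be weights. The n-dimensional Lebesgue volume of H = {x ∈ ℝⁿ : ∑_{δ∈Δ} w_δ·sqrt(∑_{d∈δ} w_d·x_d²) ≤ r} equals (1 / ∏_{δ∈Δ} ∏_{d∈δ} (w_δ·√w_d)) · (rⁿ/n!) · ∏_{δ∈Δ} ( n_δ!·π^{n_δ/2} / Γ(n_δ/2 + 1) ). -/

import Mathlib

open Real MeasureTheory
set_option maxHeartbeats 1000000

def uncurryME {ι : Type*} [Fintype ι] {κ : ι → Type*} [∀ i, Fintype (κ i)] :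
    (∀ i, κ i → ℝ) ≃ᵐ ((Σ i, κ i) → ℝ) where
  toEquiv := (Equiv.piCurry fun _ _ => ℝ).symm
  measurable_toFun :=
    measurable_pi_iff.2 fun p => (measurable_pi_apply p.2).comp (measurable_pi_apply p.1)
  measurable_invFun := by
    refine measurable_pi_iff.2 fun i => measurable_pi_iff.2 fun k => ?_
    show Measurable fun x : (Σ i, κ i) → ℝ => x ⟨i, k⟩
    exact measurable_pi_apply _

theorem measurePreserving_uncurry_pi {ι : Type*} [Fintype ι] {κ : ι → Type*} [∀ i, Fintype (κ i)] :
    MeasurePreserving (uncurryME (ι := ι) (κ := κ))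
      (volume : Measure (∀ i, κ i → ℝ)) (volume : Measure ((Σ i, κ i) → ℝ)) := by
  have hm : Measurable (uncurryME (ι := ι) (κ := κ)) := uncurryME.measurable
  refine ⟨hm, ?_⟩
  refine (Measure.pi_eq fun s hs => ?_).symm
  rw [Measure.map_apply hm (MeasurableSet.univ_pi hs)]
  have : ⇑(uncurryME (ι := ι) (κ := κ)) ⁻¹' Set.univ.pi s
      = Set.univ.pi fun i => Set.univ.pi fun k => s ⟨i, k⟩ := by
    ext f
    simp [uncurryME, Sigma.forall, Sigma.uncurry]
  rw [this, volume_pi, Measure.pi_pi]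
  simp_rw [volume_pi, Measure.pi_pi]
  rw [← Finset.univ_sigma_univ, Finset.prod_sigma]

theorem integral_comp_pi_mul {ι : Type*} [Fintype ι] {b : ι → ℝ} (hb : ∀ i, 0 < b i)
    (f : (ι → ℝ) → ℝ) :
    ∫ x : ι → ℝ, f (fun i => b i * x i) = (∏ i, b i)⁻¹ * ∫ x, f x := by
  have hbne : ∀ i, b i ≠ 0 := fun i => (hb i).ne'
  have hbprod : 0 < ∏ i, b i := Finset.prod_pos fun i _ => hb i
  let e : (ι → ℝ) ≃ᵐ (ι → ℝ) :=
    MeasurableEquiv.piCongrRight fun i => (Homeomorph.mulLeft₀ (b i) (hbne i)).toMeasurableEquiv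
  have h2 : Measure.pi (fun _ : ι => (volume : Measure ℝ))
      = ENNReal.ofReal (∏ i, b i) • Measure.map e volume := by
    refine Measure.pi_eq fun s hs => ?_
    rw [Measure.smul_apply, Measure.map_apply e.measurable (MeasurableSet.univ_pi hs)]
    have hpre : ⇑e ⁻¹' Set.univ.pi s = Set.univ.pi fun i => (b i * ·) ⁻¹' (s i) := by
      ext x; simp [e, MeasurableEquiv.piCongrRight, Homeomorph.mulLeft₀]; rfl
    rw [hpre, volume_pi, Measure.pi_pi]
    simp_rw [fun i => Real.volume_preimage_mul_left (hbne i)]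
    rw [smul_eq_mul, Finset.prod_mul_distrib, ← mul_assoc,
      ← ENNReal.ofReal_prod_of_nonneg (fun i _ => abs_nonneg _),
      ← ENNReal.ofReal_mul hbprod.le, ← Finset.prod_mul_distrib]
    have : ∏ i, b i * |(b i)⁻¹| = 1 := by
      rw [Finset.prod_eq_one]
      intro i _
      rw [abs_of_pos (inv_pos.2 (hb i)), mul_inv_cancel₀ (hbne i)]
    rw [this, ENNReal.ofReal_one, one_mul]
  have hc0 : (ENNReal.ofReal (∏ i, b i)) ≠ 0 := by
    simp [ENNReal.ofReal_eq_zero, not_le, hbprod]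
  have hmap : Measure.map e volume = ENNReal.ofReal ((∏ i, b i)⁻¹) • volume := by
    have := congrArg (fun μ => (ENNReal.ofReal (∏ i, b i))⁻¹ • μ) h2
    simp only [smul_smul, ENNReal.inv_mul_cancel hc0 ENNReal.ofReal_ne_top, one_smul] at this
    rw [← this, ENNReal.ofReal_inv_of_pos hbprod, volume_pi]
  have key : ∫ x : ι → ℝ, f (e x) = (∏ i, b i)⁻¹ * ∫ x, f x := by
    rw [← MeasureTheory.integral_map_equiv e f, hmap, integral_smul_measure,
      ENNReal.toReal_ofReal (by positivity), smul_eq_mul]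
  exact key

theorem integral_exp_neg_norm_euclidean (ι : Type*) [Fintype ι] [Nonempty ι] :
    ∫ x : EuclideanSpace ℝ ι, Real.exp (-‖x‖)
      = (Nat.factorial (Fintype.card ι) : ℝ) * π ^ ((Fintype.card ι : ℝ) / 2)
        / Real.Gamma ((Fintype.card ι : ℝ) / 2 + 1) := by
  have h1 := MeasureTheory.measure_unitBall_eq_integral_div_gamma
    (volume : Measure (EuclideanSpace ℝ ι)) (one_pos (α := ℝ))
  have h2 := EuclideanSpace.volume_ball ι (0 : EuclideanSpace ℝ ι) 1
  simp only [Real.rpow_one, finrank_euclideanSpace, div_one, ENNReal.ofReal_one, one_pow,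
    one_mul] at h1 h2
  have hI : 0 ≤ ∫ x : EuclideanSpace ℝ ι, Real.exp (-‖x‖) :=
    integral_nonneg fun x => (Real.exp_pos _).le
  have hΓ : (0:ℝ) < Real.Gamma ((Fintype.card ι : ℝ) + 1) := by
    rw [Real.Gamma_nat_eq_factorial]
    positivity
  have hΓ2 : (0:ℝ) < Real.Gamma ((Fintype.card ι : ℝ) / 2 + 1) :=
    Real.Gamma_pos_of_pos (by positivity)
  have heq : (∫ x : EuclideanSpace ℝ ι, Real.exp (-‖x‖)) / Real.Gamma ((Fintype.card ι : ℝ) + 1)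
      = Real.sqrt π ^ (Fintype.card ι) / Real.Gamma ((Fintype.card ι : ℝ) / 2 + 1) := by
    rw [← ENNReal.ofReal_eq_ofReal_iff (by positivity) (by positivity), ← h1, ← h2]
  have hsqrt : Real.sqrt π ^ (Fintype.card ι) = π ^ ((Fintype.card ι : ℝ) / 2) := by
    rw [Real.sqrt_eq_rpow, ← Real.rpow_natCast (π ^ ((1:ℝ)/2)) (Fintype.card ι),
      ← Real.rpow_mul pi_pos.le]
    ring_nf
  rw [div_eq_iff hΓ.ne', Real.Gamma_nat_eq_factorial] at heq
  rw [heq, hsqrt]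
  ring

theorem block_integral {ι : Type*} [Fintype ι] [Nonempty ι] {c : ℝ} (hc : 0 < c)
    {a : ι → ℝ} (ha : ∀ i, 0 < a i) :
    ∫ y : ι → ℝ, Real.exp (-(c * Real.sqrt (∑ i, a i * y i ^ 2)))
      = (∏ i, (c * Real.sqrt (a i)))⁻¹ *
        ((Nat.factorial (Fintype.card ι) : ℝ) * π ^ ((Fintype.card ι : ℝ) / 2)
          / Real.Gamma ((Fintype.card ι : ℝ) / 2 + 1)) := by
  have hb : ∀ i, 0 < c * Real.sqrt (a i) := fun i => mul_pos hc (Real.sqrt_pos.2 (ha i))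
  have key : ∀ y : ι → ℝ, c * Real.sqrt (∑ i, a i * y i ^ 2)
      = Real.sqrt (∑ i, ((c * Real.sqrt (a i)) * y i) ^ 2) := by
    intro y
    rw [← Real.sqrt_sq hc.le, ← Real.sqrt_mul (sq_nonneg c), Finset.mul_sum]
    · congr 1
      refine Finset.sum_congr rfl fun i _ => ?_
      rw [Real.sqrt_sq hc.le, mul_pow, mul_pow, Real.sq_sqrt (ha i).le]
      ring
  simp_rw [key]
  have h := integral_comp_pi_mul hb (fun z : ι → ℝ => Real.exp (-Real.sqrt (∑ i, z i ^ 2)))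
  rw [h]
  congr 1
  have h2 := (EuclideanSpace.volume_preserving_symm_measurableEquiv_toLp ι).integral_comp'
    (fun z : ι → ℝ => Real.exp (-Real.sqrt (∑ i, z i ^ 2)))
  rw [← h2]
  refine Eq.trans ?_ (integral_exp_neg_norm_euclidean ι)
  refine integral_congr_ae (Filter.Eventually.of_forall fun x => ?_)
  simp only [EuclideanSpace.norm_eq, Real.norm_eq_abs, sq_abs]
  rfl

/-- Volume of the hyperball of radius r under the weighted combined metric. -/
theorem volume_weighted_combined_ball (n : ℕ) (Δ : Finset (Finset (Fin n)))
    (hne : ∀ δ ∈ Δ, δ.Nonempty)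
    (hdisj : ∀ δ₁ ∈ Δ, ∀ δ₂ ∈ Δ, δ₁ ≠ δ₂ → Disjoint δ₁ δ₂)
    (hcov : ∀ d : Fin n, ∃ δ ∈ Δ, d ∈ δ)
    (wδ : Finset (Fin n) → ℝ) (wd : Fin n → ℝ)
    (hwδ : ∀ δ ∈ Δ, 0 < wδ δ) (hwd : ∀ d : Fin n, 0 < wd d)
    (r : ℝ) (hr : 0 ≤ r) :
    volume {x : Fin n → ℝ | (∑ δ ∈ Δ, wδ δ * Real.sqrt (∑ d ∈ δ, wd d * x d ^ 2)) ≤ r}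
      = ENNReal.ofReal
          ((1 / ∏ δ ∈ Δ, ∏ d ∈ δ, (wδ δ * Real.sqrt (wd d))) *
            (r ^ n / (Nat.factorial n : ℝ)) *
            ∏ δ ∈ Δ, ((Nat.factorial δ.card : ℝ) * π ^ ((δ.card : ℝ) / 2) /
              Real.Gamma ((δ.card : ℝ) / 2 + 1))) := by
  classical
  set B : Finset (Fin n) → (Fin n → ℝ) → ℝ :=
    fun δ x => Real.sqrt (∑ d ∈ δ, wd d * x d ^ 2) with hB
  set g : (Fin n → ℝ) → ℝ := fun x => ∑ δ ∈ Δ, wδ δ * B δ x with hg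
  -- properties of the per-block seminorm B
  have hBnonneg : ∀ δ x, 0 ≤ B δ x := fun δ x => Real.sqrt_nonneg _
  have hBeuclid : ∀ (δ : Finset (Fin n)) (x : Fin n → ℝ),
      B δ x = ‖(WithLp.equiv 2 ({d // d ∈ δ} → ℝ)).symm
        (fun d => Real.sqrt (wd d.1) * x d.1)‖ := by
    intro δ x
    show Real.sqrt (∑ d ∈ δ, wd d * x d ^ 2) = _
    rw [EuclideanSpace.norm_eq]
    congr 1
    rw [← Finset.sum_coe_sort δ (fun d => wd d * x d ^ 2)]
    refine Finset.sum_congr rfl fun d _ => ?_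
    rw [WithLp.equiv_symm_apply, PiLp.toLp_apply, Real.norm_eq_abs, sq_abs, mul_pow,
      Real.sq_sqrt (hwd d.1).le]
  have hBzero : ∀ δ, B δ 0 = 0 := by
    intro δ; simp [hB]
  have hBneg : ∀ δ x, B δ (-x) = B δ x := by
    intro δ x; simp [hB]
  have hBadd : ∀ δ x y, B δ (x + y) ≤ B δ x + B δ y := by
    intro δ x y
    rw [hBeuclid, hBeuclid, hBeuclid]
    have heq : (WithLp.equiv 2 ({d // d ∈ δ} → ℝ)).symm
          (fun d => Real.sqrt (wd d.1) * (x + y) d.1)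
        = (WithLp.equiv 2 ({d // d ∈ δ} → ℝ)).symm (fun d => Real.sqrt (wd d.1) * x d.1)
          + (WithLp.equiv 2 ({d // d ∈ δ} → ℝ)).symm (fun d => Real.sqrt (wd d.1) * y d.1) := by
      ext d
      show Real.sqrt (wd d.1) * (x d.1 + y d.1)
        = Real.sqrt (wd d.1) * x d.1 + Real.sqrt (wd d.1) * y d.1
      ring
    rw [heq]
    exact norm_add_le _ _
  have hBsmul : ∀ δ (t : ℝ) x, B δ (t • x) = |t| * B δ x := by
    intro δ t x
    rw [hB]
    simp only [Pi.smul_apply, smul_eq_mul]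
    have : ∀ d, wd d * (t * x d) ^ 2 = t ^ 2 * (wd d * x d ^ 2) := fun d => by ring
    simp_rw [this, ← Finset.mul_sum, Real.sqrt_mul (sq_nonneg t), Real.sqrt_sq_eq_abs]
  have hBvanish : ∀ δ x, B δ x = 0 → ∀ d ∈ δ, x d = 0 := by
    intro δ x h0 d hd
    have hsum : ∑ d ∈ δ, wd d * x d ^ 2 = 0 := by
      have h1 : 0 ≤ ∑ d ∈ δ, wd d * x d ^ 2 :=
        Finset.sum_nonneg fun d _ => mul_nonneg (hwd d).le (sq_nonneg _)
      have := Real.sqrt_eq_zero h1 |>.mp h0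
      exact this
    have := (Finset.sum_eq_zero_iff_of_nonneg
      (fun d _ => mul_nonneg (hwd d).le (sq_nonneg _))).mp hsum d hd
    have hx2 : x d ^ 2 = 0 := by
      rcases mul_eq_zero.mp this with h | h
      · exact absurd h (hwd d).ne'
      · exact h
    exact pow_eq_zero_iff (by norm_num) |>.mp hx2
  -- properties of g
  have hg0 : g 0 = 0 := by simp [hg, hBzero]
  have hgneg : ∀ x, g (-x) = g x := by intro x; simp only [hg]; simp_rw [hBneg]
  have hgadd : ∀ x y, g (x + y) ≤ g x + g y := by
    intro x y
    rw [hg, ← Finset.sum_add_distrib]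
    refine Finset.sum_le_sum fun δ hδ => ?_
    rw [← mul_add]
    exact mul_le_mul_of_nonneg_left (hBadd δ x y) (hwδ δ hδ).le
  have hgnonneg : ∀ x, 0 ≤ g x := fun x =>
    Finset.sum_nonneg fun δ hδ => mul_nonneg (hwδ δ hδ).le (hBnonneg δ x)
  have hgzero : ∀ x, g x = 0 → x = 0 := by
    intro x hx
    funext d
    obtain ⟨δ, hδ, hd⟩ := hcov d
    have hterm : ∀ δ' ∈ Δ, wδ δ' * B δ' x = 0 := by
      intro δ' hδ'
      refine (Finset.sum_eq_zero_iff_of_nonneg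
        (fun δ'' hδ'' => mul_nonneg (hwδ δ'' hδ'').le (hBnonneg δ'' x))).mp hx δ' hδ'
    have hBδ : B δ x = 0 := by
      rcases mul_eq_zero.mp (hterm δ hδ) with h | h
      · exact absurd h (hwδ δ hδ).ne'
      · exact h
    exact hBvanish δ x hBδ d hd
  have hgsmul : ∀ (t : ℝ) x, g (t • x) = |t| * g x := by
    intro t x
    simp only [hg, Finset.mul_sum]
    refine Finset.sum_congr rfl fun δ _ => ?_
    rw [hBsmul]; ring
  have hgoal : {x : Fin n → ℝ | (∑ δ ∈ Δ, wδ δ * Real.sqrt (∑ d ∈ δ, wd d * x d ^ 2)) ≤ r}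
      = {x : Fin n → ℝ | g x ≤ r} := rfl
  rw [hgoal]
  -- the product of all scaling factors
  set P : ℝ := ∏ δ ∈ Δ, ∏ d ∈ δ, (wδ δ * Real.sqrt (wd d)) with hP
  have hPpos : 0 < P :=
    Finset.prod_pos fun δ hδ => Finset.prod_pos fun d hd =>
      mul_pos (hwδ δ hδ) (Real.sqrt_pos.2 (hwd d))
  set K : Finset (Fin n) → ℝ := fun δ =>
    (Nat.factorial δ.card : ℝ) * π ^ ((δ.card : ℝ) / 2) /
      Real.Gamma ((δ.card : ℝ) / 2 + 1) with hK
  rcases Nat.eq_zero_or_pos n with hn | hn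
  · -- n = 0
    subst hn
    have hΔ : Δ = ∅ := by
      rw [Finset.eq_empty_iff_forall_notMem]
      intro δ hδ
      obtain ⟨d, _⟩ := hne δ hδ
      exact d.elim0
    subst hΔ
    have : {x : Fin 0 → ℝ | g x ≤ r} = Set.univ := by
      ext x
      simp [hg, hr]
    rw [this]
    have hP1 : P = 1 := by rw [hP, Finset.prod_empty]
    have huniv : (volume : Measure (Fin 0 → ℝ)) Set.univ = 1 := by
      rw [volume_pi, Measure.pi_univ]
      simp
    rw [huniv]
    simp [hP1]
  · -- n ≥ 1
    haveI : Nonempty (Fin n) := ⟨⟨0, hn⟩⟩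
    have hcards : ∑ δ ∈ Δ, δ.card = n := by
      have hbu : Δ.biUnion id = Finset.univ := by
        ext d
        simp only [Finset.mem_biUnion, id, Finset.mem_univ, iff_true]
        exact hcov d
      calc ∑ δ ∈ Δ, δ.card = (Δ.biUnion id).card :=
            (Finset.card_biUnion fun δ hδ ε hε hne' => hdisj δ hδ ε hε hne').symm
        _ = n := by rw [hbu]; simp
    rcases eq_or_lt_of_le hr with hr0 | hrpos
    · -- r = 0
      have hset : {x : Fin n → ℝ | g x ≤ r} = {0} := by
        ext x
        simp only [Set.mem_setOf_eq, Set.mem_singleton_iff, ← hr0]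
        constructor
        · intro hx
          exact hgzero x (le_antisymm hx (hgnonneg x))
        · rintro rfl
          rw [hg0]
      rw [hset, measure_singleton, ← hr0, zero_pow hn.ne', zero_div, mul_zero, zero_mul,
        ENNReal.ofReal_zero]
    · -- r > 0
      rw [measure_le_eq_lt volume hg0 hgneg hgadd (fun {x} h => hgzero x h)
        (fun t x => le_of_eq (hgsmul t x)) r]
      have hset : {x : Fin n → ℝ | g x < r} = {x : Fin n → ℝ | r⁻¹ * g x < 1} := by
        ext x
        simp only [Set.mem_setOf_eq]
        rw [inv_mul_lt_iff₀ hrpos, mul_one]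
      rw [hset]
      have hgamma := MeasureTheory.measure_lt_one_eq_integral_div_gamma
        (volume : Measure (Fin n → ℝ)) (g := fun x => r⁻¹ * g x)
        (by show r⁻¹ * g 0 = 0; rw [hg0, mul_zero])
        (fun x => by show r⁻¹ * g (-x) = r⁻¹ * g x; rw [hgneg])
        (fun x y => by
          show r⁻¹ * g (x + y) ≤ r⁻¹ * g x + r⁻¹ * g y
          have h2 : r⁻¹ * g (x + y) ≤ r⁻¹ * (g x + g y) :=
            mul_le_mul_of_nonneg_left (hgadd x y) (inv_nonneg.2 hr)
          linarith [h2])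
        (fun {x} h => by
          refine hgzero x ?_
          rcases mul_eq_zero.mp h with h' | h'
          · exact absurd h' (inv_ne_zero hrpos.ne')
          · exact h')
        (fun t x => by
          show r⁻¹ * g (t • x) ≤ |t| * (r⁻¹ * g x)
          rw [hgsmul]
          exact le_of_eq (by ring))
        (p := 1) one_pos
      rw [hgamma]
      simp_rw [Real.rpow_one]
      -- the partition equivalence
      let blk : Fin n → {δ // δ ∈ Δ} := fun d => ⟨(hcov d).choose, (hcov d).choose_spec.1⟩
      have hblkmem : ∀ d, d ∈ (blk d).1 := fun d => (hcov d).choose_spec.2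
      have hblkuniq : ∀ (δ : Finset (Fin n)) (hδ : δ ∈ Δ) (d : Fin n), d ∈ δ →
          blk d = ⟨δ, hδ⟩ := by
        intro δ hδ d hd
        by_contra hne'
        have hne2 : (blk d).1 ≠ δ := fun h => hne' (Subtype.ext h)
        exact Finset.disjoint_left.mp (hdisj _ (blk d).2 _ hδ hne2) (hblkmem d) hd
      let e : (Σ δ : {δ // δ ∈ Δ}, {d // d ∈ δ.1}) ≃ Fin n :=
        { toFun := fun p => p.2.1
          invFun := fun d => ⟨blk d, ⟨d, hblkmem d⟩⟩
          left_inv := by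
            rintro ⟨⟨δ, hδ⟩, d, hd⟩
            have hcongr : ∀ (a b : {δ // δ ∈ Δ}) (_ : a = b)
                (u : {d // d ∈ a.1}) (v : {d // d ∈ b.1}), (u : Fin n) = v →
                (⟨a, u⟩ : Σ δ : {δ // δ ∈ Δ}, {d // d ∈ δ.1}) = ⟨b, v⟩ := by
              rintro a b rfl u v huv
              exact congrArg _ (Subtype.ext huv)
            exact hcongr _ _ (hblkuniq δ hδ d hd) _ _ rfl
          right_inv := fun d => rfl }
      let ME := (uncurryME (ι := {δ // δ ∈ Δ}) (κ := fun δ => {d // d ∈ δ.1})).trans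
        (MeasurableEquiv.piCongrLeft (fun _ => ℝ) e)
      have hmp : MeasurePreserving ME volume volume :=
        (volume_measurePreserving_piCongrLeft (fun _ => ℝ) e).comp measurePreserving_uncurry_pi
      have hME : ∀ (y : ∀ δ : {δ // δ ∈ Δ}, {d // d ∈ δ.1} → ℝ)
          (δ : {δ // δ ∈ Δ}) (d : {d // d ∈ δ.1}), ME y d.1 = y δ d := by
        intro y δ d
        show (MeasurableEquiv.piCongrLeft (fun _ => ℝ) e) (uncurryME y) (e ⟨δ, d⟩) = y δ d
        rw [MeasurableEquiv.coe_piCongrLeft, Equiv.piCongrLeft_apply_apply]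
        rfl
      have hint : ∫ x : Fin n → ℝ, rexp (-(r⁻¹ * g x))
          = ∏ δ : {δ // δ ∈ Δ}, ∫ z : {d // d ∈ δ.1} → ℝ,
              rexp (-((r⁻¹ * wδ δ.1) * Real.sqrt (∑ d : {d // d ∈ δ.1}, wd d.1 * z d ^ 2))) := by
        rw [← hmp.integral_comp' (fun x => rexp (-(r⁻¹ * g x)))]
        have hpt : ∀ y : ∀ δ : {δ // δ ∈ Δ}, {d // d ∈ δ.1} → ℝ,
            rexp (-(r⁻¹ * g (ME y)))
              = ∏ δ : {δ // δ ∈ Δ},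
                  rexp (-((r⁻¹ * wδ δ.1) * Real.sqrt (∑ d : {d // d ∈ δ.1},
                    wd d.1 * y δ d ^ 2))) := by
          intro y
          have hgval : r⁻¹ * g (ME y)
              = ∑ δ ∈ Δ, r⁻¹ * wδ δ * B δ (ME y) := by
            rw [hg, Finset.mul_sum]
            exact Finset.sum_congr rfl fun δ _ => by ring
          rw [hgval, ← Finset.sum_neg_distrib, Real.exp_sum,
            ← Finset.prod_coe_sort Δ (fun δ => rexp (-(r⁻¹ * wδ δ * B δ (ME y))))]
          refine Finset.prod_congr rfl fun δ _ => ?_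
          have hBval : B δ.1 (ME y)
              = Real.sqrt (∑ d : {d // d ∈ δ.1}, wd d.1 * y δ d ^ 2) := by
            show Real.sqrt (∑ d ∈ δ.1, wd d * (ME y) d ^ 2) = _
            congr 1
            rw [← Finset.sum_coe_sort δ.1 (fun d => wd d * (ME y) d ^ 2)]
            exact Finset.sum_congr rfl fun d _ => by rw [hME y δ d]
          rw [hBval]
        rw [integral_congr_ae (Filter.Eventually.of_forall hpt)]
        exact MeasureTheory.integral_fintype_prod_eq_prod
          (fun (δ : {δ // δ ∈ Δ}) (z : {d // d ∈ δ.1} → ℝ) =>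
            rexp (-((r⁻¹ * wδ δ.1) * Real.sqrt (∑ d : {d // d ∈ δ.1}, wd d.1 * z d ^ 2))))
      have hblockval : ∀ δ : {δ // δ ∈ Δ},
          ∫ z : {d // d ∈ δ.1} → ℝ,
              rexp (-((r⁻¹ * wδ δ.1) * Real.sqrt (∑ d : {d // d ∈ δ.1}, wd d.1 * z d ^ 2)))
            = (r ^ δ.1.card * (∏ d ∈ δ.1, (wδ δ.1 * Real.sqrt (wd d)))⁻¹) * K δ.1 := by
        intro δ
        haveI : Nonempty {d // d ∈ δ.1} := by
          obtain ⟨d, hd⟩ := hne δ.1 δ.2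
          exact ⟨⟨d, hd⟩⟩
        have hc : 0 < r⁻¹ * wδ δ.1 := mul_pos (inv_pos.2 hrpos) (hwδ δ.1 δ.2)
        rw [block_integral hc (fun d : {d // d ∈ δ.1} => hwd d.1)]
        have hcaste : Fintype.card {d // d ∈ δ.1} = δ.1.card := Fintype.card_coe δ.1
        rw [hcaste]
        have hprodval : ∏ d : {d // d ∈ δ.1}, (r⁻¹ * wδ δ.1 * Real.sqrt (wd d.1))
            = r⁻¹ ^ δ.1.card * ∏ d ∈ δ.1, (wδ δ.1 * Real.sqrt (wd d)) := by
          rw [Finset.prod_coe_sort δ.1 (fun d => r⁻¹ * wδ δ.1 * Real.sqrt (wd d))]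
          have : ∀ d ∈ δ.1, r⁻¹ * wδ δ.1 * Real.sqrt (wd d)
              = r⁻¹ * (wδ δ.1 * Real.sqrt (wd d)) := fun d _ => by ring
          rw [Finset.prod_congr rfl this, Finset.prod_mul_distrib, Finset.prod_const]
        rw [hprodval, mul_inv, inv_pow, inv_inv, hK]
      have hQpos : ∀ δ ∈ Δ, (0:ℝ) < ∏ d ∈ δ, (wδ δ * Real.sqrt (wd d)) := by
        intro δ hδ
        exact Finset.prod_pos fun d _ => mul_pos (hwδ δ hδ) (Real.sqrt_pos.2 (hwd d))
      have hintval : ∫ x : Fin n → ℝ, rexp (-(r⁻¹ * g x)) = r ^ n * P⁻¹ * ∏ δ ∈ Δ, K δ := by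
        rw [hint, Finset.prod_congr rfl (fun δ _ => hblockval δ),
          Finset.prod_coe_sort Δ (fun δ => (r ^ δ.card *
            (∏ d ∈ δ, (wδ δ * Real.sqrt (wd d)))⁻¹) * K δ)]
        rw [Finset.prod_mul_distrib, Finset.prod_mul_distrib, Finset.prod_inv_distrib,
          Finset.prod_pow_eq_pow_sum, hcards, ← hP]
      rw [hintval]
      have hfr : (Module.finrank ℝ (Fin n → ℝ) : ℝ) = (n : ℝ) := by
        rw [Module.finrank_fintype_fun_eq_card, Fintype.card_fin]
      rw [hfr, div_one, Real.Gamma_nat_eq_factorial]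
      congr 1
      rw [one_div]
      ring
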